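/- arXiv:1301.1491 — 4 statements merged into one kernel-verified Lean document; each statement's English description precedes it below -/
import Mathlib

section
/- Let G be a finite group of order n with 1/n ∈ ℓ. Then the set Λ = {λ_g : g ∈ G}, where λ_e = (1/n)Σ_{g∈G} δ_g and λ_h = δ_e − δ_h for h ≠ e, is an ℓ-basis of the group algebra ℓG. -/
/-- The family `Λ = {λ_g : g ∈ G}` in the group algebra `ℓG`:
`λ_e = (1/n)·Σ_{g∈G} δ_g` and `λ_h = δ_e − δ_h` for `h ≠ e`. -/
noncomputable def lambdaFamily {R G : Type*} [CommRing R] [Group G] [Fintype G]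
    [DecidableEq G] (u : R) (g : G) : MonoidAlgebra R G :=
  if g = 1 then u • ∑ h : G, MonoidAlgebra.of R G h
  else MonoidAlgebra.of R G 1 - MonoidAlgebra.of R G g

/-- Let `G` be a finite group of order `n` with `1/n = u ∈ ℓ`. Then the family
`Λ = {λ_g : g ∈ G}`, where `λ_e = (1/n)Σ_{g∈G} δ_g` and `λ_h = δ_e − δ_h` for `h ≠ e`,
is an `ℓ`-basis of the group algebra `ℓG`. -/
theorem lambda_isBasis {R G : Type*} [CommRing R] [Group G] [Fintype G] [DecidableEq G]
    (u : R) (hu : (Fintype.card G : R) * u = 1) :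
    ∃ b : Module.Basis G R (MonoidAlgebra R G), ∀ g : G, b g = lambdaFamily u g := by
  classical
  set n := Fintype.card G with hn
  set δ : G → MonoidAlgebra R G := fun g => MonoidAlgebra.of R G g with hδ
  set Sδ : MonoidAlgebra R G := ∑ h : G, δ h with hSδdef
  set C : MonoidAlgebra R G := u • Sδ + (1 - u) • δ 1 with hC
  set mu : G → MonoidAlgebra R G := fun g => C - δ g + (if g = 1 then δ 1 else 0) with hmu
  let b0 : Module.Basis G R (MonoidAlgebra R G) := MonoidAlgebra.basis G R
  have hb0 : ∀ g : G, b0 g = δ g := fun g => rfl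
  let T : MonoidAlgebra R G →ₗ[R] MonoidAlgebra R G := b0.constr ℕ (lambdaFamily u)
  let S : MonoidAlgebra R G →ₗ[R] MonoidAlgebra R G := b0.constr ℕ mu
  have hT : ∀ g, T (δ g) = lambdaFamily u g := fun g => by
    rw [← hb0]; exact b0.constr_basis ℕ _ g
  have hS : ∀ g, S (δ g) = mu g := fun g => by
    rw [← hb0]; exact b0.constr_basis ℕ _ g
  have hun : ∀ x : MonoidAlgebra R G, u • (n • x) = x := by
    intro x
    rw [← Nat.cast_smul_eq_nsmul R, smul_smul, mul_comm, hu, one_smul]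
  have hlam1 : lambdaFamily u 1 = u • Sδ := by simp [lambdaFamily, hSδdef, hδ]
  have hlamne : ∀ g : G, g ≠ 1 → lambdaFamily u g = δ 1 - δ g := by
    intro g hg; simp [lambdaFamily, hg, hδ]
  have hsumlam : ∑ g : G, lambdaFamily u g = u • Sδ + n • δ 1 - Sδ := by
    rw [← Finset.add_sum_erase _ _ (Finset.mem_univ (1 : G)), hlam1]
    have h1 : ∑ g ∈ Finset.univ.erase (1 : G), lambdaFamily u g
        = ∑ g ∈ Finset.univ.erase (1 : G), (δ 1 - δ g) := by
      refine Finset.sum_congr rfl fun g hg => hlamne g (Finset.ne_of_mem_erase hg)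
    rw [h1, Finset.sum_erase _ (by simp)]
    rw [Finset.sum_sub_distrib, Finset.sum_const, Finset.card_univ, ← hSδdef, ← hn]
    abel
  have hsummu : ∑ g : G, mu g = n • C - Sδ + δ 1 := by
    simp only [hmu]
    rw [Finset.sum_add_distrib, Finset.sum_sub_distrib, Finset.sum_const, Finset.card_univ,
      Finset.sum_ite_eq' Finset.univ (1 : G) (fun _ => δ 1)]
    simp [← hSδdef, ← hn]
  have hTSδ : T Sδ = u • Sδ + n • δ 1 - Sδ := by
    rw [hSδdef, map_sum]
    simp_rw [hT]
    rw [hsumlam, ← hSδdef]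
  have hSSδ : S Sδ = n • C - Sδ + δ 1 := by
    rw [hSδdef, map_sum]
    simp_rw [hS]
    rw [hsummu, ← hSδdef]
  have hTC : T C = δ 1 := by
    rw [hC, map_add, map_smul, map_smul, hTSδ, hT, hlam1]
    rw [smul_sub, smul_add, hun, sub_smul, one_smul]
    abel
  have hST : S.comp T = LinearMap.id := by
    apply b0.ext
    intro g
    rw [LinearMap.comp_apply, LinearMap.id_apply, hb0 g, hT]
    by_cases hg : g = 1
    · subst hg
      rw [hlam1, map_smul, hSSδ, smul_add, smul_sub, hun, hC, sub_smul, one_smul]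
      abel
    · rw [hlamne g hg, map_sub, hS, hS]
      simp only [hmu, if_neg hg, add_zero]
      rw [if_true]
      module
  have hTS : T.comp S = LinearMap.id := by
    apply b0.ext
    intro g
    rw [LinearMap.comp_apply, LinearMap.id_apply, hb0 g, hS]
    by_cases hg : g = 1
    · subst hg
      simp only [hmu]
      rw [if_true]
      have h2 : C - δ 1 + δ 1 = C := by module
      rw [h2, hTC]
    · simp only [hmu, if_neg hg, add_zero]
      rw [map_sub, hTC, hT, hlamne g hg]
      abel
  refine ⟨b0.map (LinearEquiv.ofLinear T S hTS hST), fun g => ?_⟩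
  rw [Module.Basis.map_apply, hb0, LinearEquiv.ofLinear_apply, hT]
end

section
/- Let G be a group, A a G-algebra, and W = ℓG the regular G-module. Let M_G denote the algebra of finitely supported G×G matrices over ℓ, with G acting by g·e_{s,t} = e_{gs,gt}. Then the maps φ(a⋊g ⊗ m) = (a ⊗ m·ρ(g⁻¹)) ⋊ g and ψ(a ⊗ m ⋊ g) = (a ⋊ g) ⊗ m·ρ(g) are mutually inverse ℓ-algebra isomorphisms between (A ⋊ G) ⊗ M_G and (A ⊗ M_G) ⋊ G, where ρ(g) = Σ_t e_{gt,t} is the permutation matrix of g. -/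
open Finsupp

section

variable {R G A : Type*} [CommRing R] [Group G] [DecidableEq G] [NonUnitalRing A] [Module R A]
  [DistribMulAction G A] [SMulCommClass G R A]

/-- Crossed product multiplication on `A ⋊ G ≅ (G →₀ A)`: `(a⋊g)(b⋊h) = a(g·b) ⋊ gh`. -/
noncomputable def crossedMul (x y : G →₀ A) : G →₀ A :=
  Finsupp.sum x fun g a => Finsupp.sum y fun h b => Finsupp.single (g * h) (a * g • b)

/-- Multiplication on `(A ⋊ G) ⊗ M_G`, modelled as `(G × G) →₀ (A ⋊ G)`
(the element `(a⋊g) ⊗ e_{u,v}` being `single (u,v) (single g a)`): the tensor product of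
the crossed product multiplication with matrix multiplication. -/
noncomputable def tensMatMul (x y : (G × G) →₀ (G →₀ A)) : (G × G) →₀ (G →₀ A) :=
  Finsupp.sum x fun p c => Finsupp.sum y fun q d =>
    if p.2 = q.1 then Finsupp.single (p.1, q.2) (crossedMul c d) else 0

/-- Multiplication on `A ⊗ M_G`, modelled as `(G × G) →₀ A`
(the element `a ⊗ e_{u,v}` being `single (u,v) a`). -/
noncomputable def matAMul (x y : (G × G) →₀ A) : (G × G) →₀ A :=
  Finsupp.sum x fun p a => Finsupp.sum y fun q b =>
    if p.2 = q.1 then Finsupp.single (p.1, q.2) (a * b) else 0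

/-- The diagonal `G`-action on `A ⊗ M_G ≅ (G × G) →₀ A`, where `G` acts on `M_G` by
`g·e_{s,t} = e_{gs,gt}`. -/
noncomputable def diagAct (g : G) (x : (G × G) →₀ A) : (G × G) →₀ A :=
  Finsupp.sum x fun p a => Finsupp.single (g * p.1, g * p.2) (g • a)

/-- Crossed product multiplication on `(A ⊗ M_G) ⋊ G`, modelled as `G →₀ ((G × G) →₀ A)`
(the element `(a ⊗ e_{u,v}) ⋊ g` being `single g (single (u,v) a)`). -/
noncomputable def matCrossedMul (x y : G →₀ ((G × G) →₀ A)) : G →₀ ((G × G) →₀ A) :=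
  Finsupp.sum x fun g c => Finsupp.sum y fun h d =>
    Finsupp.single (g * h) (matAMul c (diagAct g d))

/-! ### Auxiliary material for the proof -/

set_option linter.unusedSectionVars false

section Bisum

variable {α β M N P : Type*} [AddCommMonoid M] [AddCommMonoid N] [AddCommMonoid P]

/-- Generic "biadditive extension" sum. -/
noncomputable def bisum (F : α → β → M → N → P) (x : α →₀ M) (y : β →₀ N) : P :=
  Finsupp.sum x fun p c => Finsupp.sum y fun q d => F p q c d

lemma bisum_single_single (F : α → β → M → N → P)
    (h0l : ∀ p q d, F p q 0 d = 0) (h0r : ∀ p q c, F p q c 0 = 0)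
    (p : α) (c : M) (q : β) (d : N) :
    bisum F (Finsupp.single p c) (Finsupp.single q d) = F p q c d := by
  have h1 : ∀ c : M, ((Finsupp.single q d).sum fun q' d' => F p q' c d') = F p q c d :=
    fun c => Finsupp.sum_single_index (h0r p q c)
  rw [bisum, Finsupp.sum_single_index ((h1 0).trans (h0l p q d)), h1]

lemma bisum_zero_left (F : α → β → M → N → P) (y : β →₀ N) : bisum F 0 y = 0 :=
  Finsupp.sum_zero_index

lemma bisum_zero_right (F : α → β → M → N → P) (x : α →₀ M) : bisum F x 0 = 0 := by
  simp [bisum, Finsupp.sum_zero_index]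

lemma bisum_add_left (F : α → β → M → N → P)
    (h0l : ∀ p q d, F p q 0 d = 0)
    (haddl : ∀ p q c c' d, F p q (c + c') d = F p q c d + F p q c' d)
    (x x' : α →₀ M) (y : β →₀ N) :
    bisum F (x + x') y = bisum F x y + bisum F x' y := by
  unfold bisum
  rw [Finsupp.sum_add_index' (fun p => by simp only [h0l, Finsupp.sum, Finset.sum_const_zero])
    (fun p c c' => by simp only [haddl, Finsupp.sum_add])]

lemma bisum_add_right (F : α → β → M → N → P)
    (h0r : ∀ p q c, F p q c 0 = 0)
    (haddr : ∀ p q c d d', F p q c (d + d') = F p q c d + F p q c d')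
    (x : α →₀ M) (y y' : β →₀ N) :
    bisum F x (y + y') = bisum F x y + bisum F x y' := by
  rw [bisum, bisum, bisum, ← Finsupp.sum_add]
  refine Finsupp.sum_congr fun p _ => ?_
  rw [Finsupp.sum_add_index' (fun q => h0r p q _) (fun q d d' => haddr p q _ d d')]

end Bisum

lemma crossedMul_def (x y : G →₀ A) :
    crossedMul x y = bisum (fun g h a b => Finsupp.single (g * h) (a * g • b)) x y := rfl

lemma crossedMul_single_single (g h : G) (a b : A) :
    crossedMul (Finsupp.single g a) (Finsupp.single h b) =
      Finsupp.single (g * h) (a * g • b) := by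
  rw [crossedMul_def, bisum_single_single] <;> simp

lemma crossedMul_zero_left (y : G →₀ A) : crossedMul 0 y = 0 := bisum_zero_left _ y

lemma crossedMul_zero_right (x : G →₀ A) : crossedMul x 0 = 0 := bisum_zero_right _ x

lemma crossedMul_add_left (x x' y : G →₀ A) :
    crossedMul (x + x') y = crossedMul x y + crossedMul x' y := by
  rw [crossedMul_def, crossedMul_def, crossedMul_def]
  exact bisum_add_left _ (by simp) (by intros; simp [add_mul, Finsupp.single_add]) x x' y

lemma crossedMul_add_right (x y y' : G →₀ A) :
    crossedMul x (y + y') = crossedMul x y + crossedMul x y' := by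
  rw [crossedMul_def, crossedMul_def, crossedMul_def]
  exact bisum_add_right _ (by simp) (by intros; simp [smul_add, mul_add, Finsupp.single_add]) x y y'

lemma tensMatMul_def (x y : (G × G) →₀ (G →₀ A)) :
    tensMatMul x y = bisum (fun p q c d =>
      if p.2 = q.1 then Finsupp.single (p.1, q.2) (crossedMul c d) else 0) x y := rfl

lemma tensMatMul_single_single (p q : G × G) (c d : G →₀ A) :
    tensMatMul (Finsupp.single p c) (Finsupp.single q d) =
      if p.2 = q.1 then Finsupp.single (p.1, q.2) (crossedMul c d) else 0 := by
  rw [tensMatMul_def, bisum_single_single]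
  · intro p q d; simp [crossedMul_zero_left]
  · intro p q c; simp [crossedMul_zero_right]

lemma tensMatMul_zero_left (y : (G × G) →₀ (G →₀ A)) : tensMatMul 0 y = 0 :=
  bisum_zero_left _ y

lemma tensMatMul_zero_right (x : (G × G) →₀ (G →₀ A)) : tensMatMul x 0 = 0 :=
  bisum_zero_right _ x

lemma tensMatMul_add_left (x x' y : (G × G) →₀ (G →₀ A)) :
    tensMatMul (x + x') y = tensMatMul x y + tensMatMul x' y := by
  rw [tensMatMul_def, tensMatMul_def, tensMatMul_def]
  refine bisum_add_left _ (fun p q d => by simp [crossedMul_zero_left])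
    (fun p q c c' d => ?_) x x' y
  split_ifs <;> simp [crossedMul_add_left, Finsupp.single_add]

lemma tensMatMul_add_right (x y y' : (G × G) →₀ (G →₀ A)) :
    tensMatMul x (y + y') = tensMatMul x y + tensMatMul x y' := by
  rw [tensMatMul_def, tensMatMul_def, tensMatMul_def]
  refine bisum_add_right _ (fun p q c => by simp [crossedMul_zero_right])
    (fun p q c d d' => ?_) x y y'
  split_ifs <;> simp [crossedMul_add_right, Finsupp.single_add]

lemma diagAct_single (g : G) (p : G × G) (a : A) :
    diagAct g (Finsupp.single p a) = Finsupp.single (g * p.1, g * p.2) (g • a) := by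
  rw [diagAct, Finsupp.sum_single_index]; simp

lemma diagAct_zero (g : G) : diagAct g (0 : (G × G) →₀ A) = 0 := Finsupp.sum_zero_index

lemma diagAct_add (g : G) (x x' : (G × G) →₀ A) :
    diagAct g (x + x') = diagAct g x + diagAct g x' := by
  unfold diagAct
  rw [Finsupp.sum_add_index'] <;> simp [smul_add, Finsupp.single_add]

lemma matAMul_def (x y : (G × G) →₀ A) :
    matAMul x y = bisum (fun p q (a b : A) =>
      if p.2 = q.1 then Finsupp.single (p.1, q.2) (a * b) else 0) x y := rfl

lemma matAMul_single_single (p q : G × G) (a b : A) :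
    matAMul (Finsupp.single p a) (Finsupp.single q b) =
      if p.2 = q.1 then Finsupp.single (p.1, q.2) (a * b) else 0 := by
  rw [matAMul_def, bisum_single_single] <;> intros <;> simp

lemma matAMul_zero_left (y : (G × G) →₀ A) : matAMul 0 y = 0 := bisum_zero_left _ y

lemma matAMul_zero_right (x : (G × G) →₀ A) : matAMul x 0 = 0 := bisum_zero_right _ x

lemma matAMul_add_left (x x' y : (G × G) →₀ A) :
    matAMul (x + x') y = matAMul x y + matAMul x' y := by
  rw [matAMul_def, matAMul_def, matAMul_def]
  refine bisum_add_left _ (fun p q d => by simp) (fun p q c c' d => ?_) x x' y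
  split_ifs <;> simp [add_mul, Finsupp.single_add]

lemma matAMul_add_right (x y y' : (G × G) →₀ A) :
    matAMul x (y + y') = matAMul x y + matAMul x y' := by
  rw [matAMul_def, matAMul_def, matAMul_def]
  refine bisum_add_right _ (fun p q c => by simp) (fun p q c d d' => ?_) x y y'
  split_ifs <;> simp [mul_add, Finsupp.single_add]

lemma matCrossedMul_def (x y : G →₀ ((G × G) →₀ A)) :
    matCrossedMul x y = bisum (fun g h c d =>
      Finsupp.single (g * h) (matAMul c (diagAct g d))) x y := rfl

lemma matCrossedMul_single_single (g h : G) (c d : (G × G) →₀ A) :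
    matCrossedMul (Finsupp.single g c) (Finsupp.single h d) =
      Finsupp.single (g * h) (matAMul c (diagAct g d)) := by
  rw [matCrossedMul_def, bisum_single_single]
  · intro p q d; simp [matAMul_zero_left]
  · intro p q c; simp [diagAct_zero, matAMul_zero_right]

lemma matCrossedMul_zero_left (y : G →₀ ((G × G) →₀ A)) : matCrossedMul 0 y = 0 :=
  bisum_zero_left _ y

lemma matCrossedMul_zero_right (x : G →₀ ((G × G) →₀ A)) : matCrossedMul x 0 = 0 :=
  bisum_zero_right _ x

lemma matCrossedMul_add_left (x x' y : G →₀ ((G × G) →₀ A)) :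
    matCrossedMul (x + x') y = matCrossedMul x y + matCrossedMul x' y := by
  rw [matCrossedMul_def, matCrossedMul_def, matCrossedMul_def]
  exact bisum_add_left _ (fun p q d => by simp [matAMul_zero_left])
    (fun p q c c' d => by simp [matAMul_add_left, Finsupp.single_add]) x x' y

lemma matCrossedMul_add_right (x y y' : G →₀ ((G × G) →₀ A)) :
    matCrossedMul x (y + y') = matCrossedMul x y + matCrossedMul x y' := by
  rw [matCrossedMul_def, matCrossedMul_def, matCrossedMul_def]
  exact bisum_add_right _ (fun p q c => by simp [diagAct_zero, matAMul_zero_right])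
    (fun p q c d d' => by simp [diagAct_add, matAMul_add_right, Finsupp.single_add]) x y y'

/-- Generic biadditive extension principle: two maps biadditive in both arguments that agree
on pairs of singles agree everywhere. -/
lemma biadd_ext {α β M N P : Type*} [AddCommMonoid M] [AddCommMonoid N] [AddCommMonoid P]
    (f g : (α →₀ M) → (β →₀ N) → P)
    (hfl : ∀ x x' y, f (x + x') y = f x y + f x' y)
    (hfr : ∀ x y y', f x (y + y') = f x y + f x y')
    (hf0l : ∀ y, f 0 y = 0) (hf0r : ∀ x, f x 0 = 0)
    (hgl : ∀ x x' y, g (x + x') y = g x y + g x' y)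
    (hgr : ∀ x y y', g x (y + y') = g x y + g x y')
    (hg0l : ∀ y, g 0 y = 0) (hg0r : ∀ x, g x 0 = 0)
    (hs : ∀ p c q d, f (Finsupp.single p c) (Finsupp.single q d) =
      g (Finsupp.single p c) (Finsupp.single q d))
    (x : α →₀ M) (y : β →₀ N) : f x y = g x y := by
  have key : ∀ (p : α) (c : M) (y : β →₀ N),
      f (Finsupp.single p c) y = g (Finsupp.single p c) y := by
    intro p c y
    induction y using Finsupp.induction with
    | zero => rw [hf0r, hg0r]
    | single_add q d y hq hd ih => rw [hfr, hgr, ih, hs]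
  induction x using Finsupp.induction with
  | zero => rw [hf0l, hg0l]
  | single_add p c x hp hc ih => rw [hfl, hgl, ih, key]

/-! The linear equivalence. -/

/-- The index shuffle `((u,v),g) ↦ (g,(u,gv))`. -/
def prodShift (G : Type*) [Group G] : ((G × G) × G) ≃ (G × (G × G)) where
  toFun x := (x.2, (x.1.1, x.2 * x.1.2))
  invFun y := ((y.2.1, y.1⁻¹ * y.2.2), y.1)
  left_inv := by rintro ⟨⟨u, v⟩, g⟩; simp
  right_inv := by rintro ⟨g, r, t⟩; simp

lemma fpl_single {R α β M : Type*} [Semiring R] [AddCommMonoid M] [Module R M]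
    (p : α) (q : β) (a : M) :
    finsuppProdLEquiv R (Finsupp.single (p, q) a) = Finsupp.single p (Finsupp.single q a) := by
  classical
  ext x y
  rw [show ((finsuppProdLEquiv R (Finsupp.single (p, q) a)) x) y = Finsupp.single (p, q) a (x, y) from rfl]
  simp only [Finsupp.single_apply, Prod.mk.injEq, ite_and]
  split_ifs <;> simp_all

lemma fpl_symm_single {R α β M : Type*} [Semiring R] [AddCommMonoid M] [Module R M]
    (p : α) (q : β) (a : M) :
    (finsuppProdLEquiv R).symm (Finsupp.single p (Finsupp.single q a)) =
      Finsupp.single (p, q) a := by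
  rw [LinearEquiv.symm_apply_eq, fpl_single]

/-- The equivalence `φ` of the statement. -/
noncomputable def theEquiv : ((G × G) →₀ (G →₀ A)) ≃ₗ[R] (G →₀ ((G × G) →₀ A)) :=
  (finsuppProdLEquiv R).symm ≪≫ₗ (Finsupp.domLCongr (prodShift G)) ≪≫ₗ finsuppProdLEquiv R

lemma theEquiv_single (u v g : G) (a : A) :
    (theEquiv (R := R)) (Finsupp.single (u, v) (Finsupp.single g a)) =
      Finsupp.single g (Finsupp.single (u, g * v) a) := by
  rw [theEquiv, LinearEquiv.trans_apply, LinearEquiv.trans_apply, fpl_symm_single,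
    Finsupp.domLCongr_single, fpl_single]
  rfl

lemma theEquiv_symm_single (g r t : G) (a : A) :
    (theEquiv (R := R)).symm (Finsupp.single g (Finsupp.single (r, t) a)) =
      Finsupp.single (r, g⁻¹ * t) (Finsupp.single g a) := by
  rw [LinearEquiv.symm_apply_eq, theEquiv_single]
  simp

/-- The key single-single computation. -/
lemma theEquiv_key (u v g p q h : G) (a b : A) :
    (theEquiv (R := R)) (tensMatMul (Finsupp.single (u, v) (Finsupp.single g a))
        (Finsupp.single (p, q) (Finsupp.single h b))) =
      matCrossedMul
        ((theEquiv (R := R)) (Finsupp.single (u, v) (Finsupp.single g a)))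
        ((theEquiv (R := R)) (Finsupp.single (p, q) (Finsupp.single h b))) := by
  rw [theEquiv_single, theEquiv_single, tensMatMul_single_single,
    matCrossedMul_single_single, diagAct_single, matAMul_single_single]
  simp only [crossedMul_single_single]
  by_cases hvp : v = p
  · subst hvp
    rw [if_pos rfl, if_pos rfl, theEquiv_single]
    simp [mul_assoc]
  · rw [if_neg hvp, if_neg (by simpa using hvp)]
    simp

/-- Let `G` be a group and `A` a `G`-algebra. The maps
`φ(a⋊g ⊗ e_{u,v}) = (a ⊗ e_{u,v}·ρ(g⁻¹)) ⋊ g = (a ⊗ e_{u,gv}) ⋊ g` and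
`ψ(a ⊗ e_{r,t} ⋊ g) = (a⋊g) ⊗ e_{r,t}·ρ(g) = (a⋊g) ⊗ e_{r,g⁻¹t}` are mutually inverse
`ℓ`-algebra isomorphisms between `(A ⋊ G) ⊗ M_G` and `(A ⊗ M_G) ⋊ G`, where `ρ(g)` is the
permutation matrix of `g`. -/
theorem crossed_tensor_matrices_iso
    (hmul : ∀ (g : G) (a b : A), g • (a * b) = (g • a) * (g • b)) :
    ∃ e : ((G × G) →₀ (G →₀ A)) ≃ₗ[R] (G →₀ ((G × G) →₀ A)),
      (∀ (u v g : G) (a : A),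
        e (Finsupp.single (u, v) (Finsupp.single g a)) =
          Finsupp.single g (Finsupp.single (u, g * v) a)) ∧
      (∀ (g r t : G) (a : A),
        e.symm (Finsupp.single g (Finsupp.single (r, t) a)) =
          Finsupp.single (r, g⁻¹ * t) (Finsupp.single g a)) ∧
      (∀ x y : (G × G) →₀ (G →₀ A), e (tensMatMul x y) = matCrossedMul (e x) (e y)) := by
  refine ⟨theEquiv, fun u v g a => theEquiv_single u v g a,
    fun g r t a => theEquiv_symm_single g r t a, fun x y => ?_⟩
  refine biadd_ext (fun x y => (theEquiv (R := R)) (tensMatMul x y))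
    (fun x y => matCrossedMul (theEquiv (R := R) x) (theEquiv (R := R) y))
    (fun x x' y => by simp only [tensMatMul_add_left, map_add])
    (fun x y y' => by simp only [tensMatMul_add_right, map_add])
    (fun y => by simp only [tensMatMul_zero_left, map_zero])
    (fun x => by simp only [tensMatMul_zero_right, map_zero])
    (fun x x' y => by simp only [map_add, matCrossedMul_add_left])
    (fun x y y' => by simp only [map_add, matCrossedMul_add_right])
    (fun y => by simp only [map_zero, matCrossedMul_zero_left])
    (fun x => by simp only [map_zero, matCrossedMul_zero_right])
    (fun P c Q d => ?_) x y
  -- inner biadditive extension on the values c, d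
  obtain ⟨u, v⟩ := P
  obtain ⟨p, q⟩ := Q
  refine biadd_ext
    (fun c d => (theEquiv (R := R)) (tensMatMul (Finsupp.single ((u, v) : G × G) c)
      (Finsupp.single ((p, q) : G × G) d)))
    (fun c d => matCrossedMul (theEquiv (R := R) (Finsupp.single ((u, v) : G × G) c))
      (theEquiv (R := R) (Finsupp.single ((p, q) : G × G) d)))
    (fun c c' d => by simp only [Finsupp.single_add, tensMatMul_add_left, map_add])
    (fun c d d' => by simp only [Finsupp.single_add, tensMatMul_add_right, map_add])
    (fun d => by simp only [Finsupp.single_zero, tensMatMul_zero_left, map_zero])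
    (fun c => by simp only [Finsupp.single_zero, tensMatMul_zero_right, map_zero])
    (fun c c' d => by simp only [Finsupp.single_add, map_add, matCrossedMul_add_left])
    (fun c d d' => by simp only [Finsupp.single_add, map_add, matCrossedMul_add_right])
    (fun d => by simp only [Finsupp.single_zero, map_zero, matCrossedMul_zero_left])
    (fun c => by simp only [Finsupp.single_zero, map_zero, matCrossedMul_zero_right])
    (fun g a h b => theEquiv_key u v g p q h a b) c d

end
end

section
/- Let H ≤ G and A a G-algebra. Then the map sending ξ_H(s,b) to χ_{sH} ⊗ (s·b) is an isomorphism of G-algebras Ind_H^G(Res_H^G A) ≅ ℓ^{(G/H)} ⊗ A, where ℓ^{(G/H)} is the algebra of finitely supported functions G/H → ℓ with pointwise multiplication and G acting by translation of cosets. -/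
section

variable {R G : Type*} [CommRing R] [Group G] (H : Subgroup G) [DecidablePred (· ∈ H)]

/-- The induced module `Ind_H^G(M)`. -/
def IndSub {M : Type*} [AddCommGroup M] [Module R M]
    (act : ↥H →* Module.End R M) : Submodule R (G → M) where
  carrier := {f | (Set.Finite ((fun s : G => (QuotientGroup.mk s : G ⧸ H)) ''
      Function.support f)) ∧ ∀ (s : G) (h : H), f s = act h (f (s * (h : G)))}
  add_mem' := by
    rintro f f' ⟨hf1, hf2⟩ ⟨hf1', hf2'⟩
    refine ⟨(hf1.union hf1').subset ?_, fun s h => ?_⟩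
    · rw [← Set.image_union]
      exact Set.image_mono (Function.support_add _ _)
    · show f s + f' s = act h (f (s * h) + f' (s * h))
      rw [map_add, ← hf2 s h, ← hf2' s h]
  zero_mem' := by
    refine ⟨?_, fun s h => by simp⟩
    simp
  smul_mem' := by
    rintro r f ⟨hf1, hf2⟩
    refine ⟨hf1.subset (Set.image_mono (Function.support_const_smul_subset r f)),
      fun s h => ?_⟩
    show r • f s = act h (r • f (s * h))
    rw [map_smul, ← hf2 s h]

/-- The element `ξ_H(g,m)` of `Ind_H^G(M)`. -/
def xiP {M : Type*} [AddCommGroup M] [Module R M] (act : ↥H →* Module.End R M)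
    (g : G) (m : M) : G → M := fun s =>
  if hs : g⁻¹ * s ∈ H then act (⟨g⁻¹ * s, hs⟩ : H)⁻¹ m else 0

theorem xiP_mem {M : Type*} [AddCommGroup M] [Module R M] (act : ↥H →* Module.End R M)
    (g : G) (m : M) : xiP H act g m ∈ IndSub H act := by
  constructor
  · refine (Set.finite_singleton ((QuotientGroup.mk g : G ⧸ H))).subset ?_
    rintro q ⟨s, hs, rfl⟩
    have hmem : g⁻¹ * s ∈ H := by
      by_contra hc
      exact hs (by simp [xiP, hc])
    exact Set.mem_singleton_iff.mpr ((QuotientGroup.eq.mpr hmem).symm)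
  · intro s h
    by_cases hs : g⁻¹ * s ∈ H
    · have hsh : g⁻¹ * (s * (h : G)) ∈ H := by
        have := mul_mem hs h.2
        simpa [mul_assoc] using this
      have key : (⟨g⁻¹ * s, hs⟩ : H)⁻¹ = h * (⟨g⁻¹ * (s * (h : G)), hsh⟩ : H)⁻¹ := by
        apply Subtype.ext
        simp [mul_inv_rev, mul_assoc]
      show (if hs : g⁻¹ * s ∈ H then act (⟨g⁻¹ * s, hs⟩ : H)⁻¹ m else 0) = _
      rw [dif_pos hs, key, map_mul]
      simp [xiP, dif_pos hsh]
    · have hsh : ¬ (g⁻¹ * (s * (h : G)) ∈ H) := by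
        intro hc
        apply hs
        have := mul_mem hc (inv_mem h.2)
        simpa [mul_assoc] using this
      show (if hs : g⁻¹ * s ∈ H then act (⟨g⁻¹ * s, hs⟩ : H)⁻¹ m else 0) = _
      rw [dif_neg hs]
      simp [xiP, dif_neg hsh]

theorem ind_trans_mem {M : Type*} [AddCommGroup M] [Module R M]
    (act : ↥H →* Module.End R M) (g : G) {f : G → M} (hf : f ∈ IndSub H act) :
    (fun s => f (g⁻¹ * s)) ∈ IndSub H act := by
  obtain ⟨hf1, hf2⟩ := hf
  constructor
  · refine (hf1.image (fun q => g • q)).subset ?_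
    rintro q ⟨s, hs, rfl⟩
    refine ⟨QuotientGroup.mk (g⁻¹ * s), ⟨g⁻¹ * s, hs, rfl⟩, ?_⟩
    show (g * (g⁻¹ * s) : G) = (s : G ⧸ H)
    rw [mul_inv_cancel_left]
  · intro s h
    simpa [mul_assoc] using hf2 (g⁻¹ * s) h

theorem ind_mul_mem {B : Type*} [NonUnitalRing B] [Module R B]
    (act : ↥H →* Module.End R B)
    (hact : ∀ (h : ↥H) (x y : B), act h (x * y) = act h x * act h y)
    {f f' : G → B} (hf : f ∈ IndSub H act) (hf' : f' ∈ IndSub H act) :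
    f * f' ∈ IndSub H act := by
  refine ⟨hf.1.subset (Set.image_mono (Function.support_mul_subset_left _ _)),
    fun s h => ?_⟩
  show f s * f' s = act h (f (s * h) * f' (s * h))
  rw [hact, ← hf.2 s h, ← hf'.2 s h]

variable {A : Type*} [NonUnitalRing A] [Module R A] [DistribMulAction G A]
  [SMulCommClass G R A]

/-- The restriction to `H` of the `G`-action on `A`, as linear endomorphisms. -/
noncomputable def resAct : ↥H →* Module.End R A :=
  (DistribMulAction.toModuleEnd R A).comp H.subtype

/-- Multiplication on `ℓ^{(G/H)} ⊗ A`, modelled as `G ⧸ H →₀ A`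
(the element `χ_q ⊗ a` being `single q a`): pointwise in the `G/H`-coordinate. -/
noncomputable def cosetMul [DecidableEq (G ⧸ H)] (x y : (G ⧸ H) →₀ A) : (G ⧸ H) →₀ A :=
  Finsupp.sum x fun q a => Finsupp.sum y fun q' a' =>
    if q = q' then Finsupp.single q (a * a') else 0

/-- The diagonal `G`-action on `ℓ^{(G/H)} ⊗ A ≅ (G ⧸ H) →₀ A`:
`g·(χ_{sH} ⊗ a) = χ_{gsH} ⊗ g·a`. -/
noncomputable def cosetAct (g : G) (x : (G ⧸ H) →₀ A) : (G ⧸ H) →₀ A :=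
  Finsupp.sum x fun q a => Finsupp.single (g • q) (g • a)

section Aux

variable {R G : Type*} [CommRing R] [Group G] (H : Subgroup G) [DecidablePred (· ∈ H)]
variable {A : Type*} [NonUnitalRing A] [Module R A] [DistribMulAction G A]
  [SMulCommClass G R A]

theorem resAct_apply' (h : ↥H) (a : A) : resAct (R := R) H h a = (h : G) • a := rfl

theorem indsub_rep {f : G → A} (hf : f ∈ IndSub H (resAct (R := R) H)) {s t : G}
    (hst : (QuotientGroup.mk s : G ⧸ H) = QuotientGroup.mk t) :
    s • f s = t • f t := by
  have hm : s⁻¹ * t ∈ H := QuotientGroup.eq.mp hst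
  have h2 := hf.2 s ⟨s⁻¹ * t, hm⟩
  rw [resAct_apply'] at h2
  simp only at h2
  rw [mul_inv_cancel_left] at h2
  rw [h2, smul_smul, mul_inv_cancel_left]

/-- Forward map: `f ↦ (q ↦ out q • f (out q))`. -/
noncomputable def eFun (f : ↥(IndSub H (resAct (R := R) H (A := A)))) : (G ⧸ H) →₀ A :=
  Finsupp.onFinset f.2.1.toFinset (fun q => q.out • (f : G → A) q.out) (by
    intro q hq
    exact Set.Finite.mem_toFinset _ |>.mpr
      ⟨q.out, fun h0 => hq (by simp [h0]), QuotientGroup.out_eq' q⟩)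

theorem eFun_apply (f : ↥(IndSub H (resAct (R := R) H (A := A)))) (q : G ⧸ H) :
    eFun H f q = q.out • (f : G → A) q.out := rfl

/-- `eFun` depends on representatives only through the coset. -/
theorem eFun_apply' (f : ↥(IndSub H (resAct (R := R) H (A := A)))) (s : G) :
    eFun H f (QuotientGroup.mk s) = s • (f : G → A) s := by
  rw [eFun_apply]
  exact indsub_rep H f.2 (QuotientGroup.out_eq' _)

theorem invFun_mem (x : (G ⧸ H) →₀ A) :
    (fun s : G => s⁻¹ • x (QuotientGroup.mk s)) ∈ IndSub H (resAct (R := R) H (A := A)) := by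
  constructor
  · refine (x.support.finite_toSet).subset ?_
    rintro q ⟨s, hs, rfl⟩
    have : x (QuotientGroup.mk s) ≠ 0 := by
      intro h0; apply hs; simp only [h0, smul_zero]
    simpa using this
  · intro s h
    rw [resAct_apply']
    have hq : (QuotientGroup.mk (s * (h : G)) : G ⧸ H) = QuotientGroup.mk s :=
      QuotientGroup.eq.mpr (by simpa [mul_assoc] using (H.inv_mem h.2))
    simp only [hq, mul_inv_rev, mul_smul, smul_inv_smul]

theorem cosetMul_apply [DecidableEq (G ⧸ H)] (x y : (G ⧸ H) →₀ A) (p : G ⧸ H) :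
    cosetMul H x y p = x p * y p := by
  unfold cosetMul
  rw [Finsupp.sum_apply]
  have inner : ∀ (q : G ⧸ H) (a : A),
      (Finsupp.sum y fun q' a' => if q = q' then Finsupp.single q (a * a') else 0) p
        = if q = p then a * y p else 0 := by
    intro q a
    rw [Finsupp.sum_apply]
    have : (Finsupp.sum y fun q' a' => (if q = q' then Finsupp.single q (a * a') else 0) p)
        = Finsupp.sum y fun q' a' => if q = q' then (if q = p then a * a' else 0) else 0 := by
      refine Finsupp.sum_congr fun q' _ => ?_
      split_ifs with h1 h2
      · rw [Finsupp.single_apply, if_pos h2]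
      · rw [Finsupp.single_apply, if_neg h2]
      · rfl
    rw [this, Finsupp.sum_ite_eq]
    by_cases h2 : q = p
    · subst h2
      by_cases h1 : q ∈ y.support
      · simp [h1]
      · simp [h1, Finsupp.notMem_support_iff.mp h1]
    · simp [h2]
  calc (Finsupp.sum x fun q a =>
        (Finsupp.sum y fun q' a' => if q = q' then Finsupp.single q (a * a') else 0) p)
      = Finsupp.sum x fun q a => if q = p then a * y p else 0 := by
        exact Finsupp.sum_congr fun q hq => inner q (x q)
    _ = x p * y p := by
        rw [Finsupp.sum_ite_eq']
        by_cases h : p ∈ x.support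
        · simp [h]
        · simp [h, Finsupp.notMem_support_iff.mp h]

theorem cosetAct_apply [DecidableEq (G ⧸ H)] (g : G) (x : (G ⧸ H) →₀ A) (p : G ⧸ H) :
    cosetAct H g x p = g • x (g⁻¹ • p) := by
  unfold cosetAct
  rw [Finsupp.sum_apply]
  have : (Finsupp.sum x fun q a => (Finsupp.single (g • q) (g • a)) p)
      = Finsupp.sum x fun q a => if q = g⁻¹ • p then g • a else 0 := by
    refine Finsupp.sum_congr fun q _ => ?_
    rw [Finsupp.single_apply]
    by_cases h : g • q = p
    · rw [if_pos h, if_pos (by rw [← h, inv_smul_smul])]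
    · rw [if_neg h, if_neg (fun hc => h (by rw [hc, smul_inv_smul]))]
  rw [this, Finsupp.sum_ite_eq']
  by_cases h : g⁻¹ • p ∈ x.support
  · simp [h]
  · simp [h, Finsupp.notMem_support_iff.mp h]

end Aux

/-- Let `H ≤ G` and `A` a `G`-algebra. The map `ξ_H(s,b) ↦ χ_{sH} ⊗ (s·b)`
is an isomorphism of `G`-algebras `Ind_H^G(Res_H^G A) ≅ ℓ^{(G/H)} ⊗ A`: an `ℓ`-linear
equivalence, given on generators by this formula, which is multiplicative and
`G`-equivariant. -/
theorem ind_res_iso [DecidableEq (G ⧸ H)]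
    (hmulA : ∀ (g : G) (x y : A), g • (x * y) = (g • x) * (g • y)) :
    ∃ e : ↥(IndSub H (resAct (R := R) H (A := A))) ≃ₗ[R] ((G ⧸ H) →₀ A),
      (∀ (s : G) (b : A),
        e ⟨xiP H (resAct H) s b, xiP_mem H _ s b⟩ =
          Finsupp.single (QuotientGroup.mk s : G ⧸ H) (s • b)) ∧
      (∀ x y : ↥(IndSub H (resAct (R := R) H (A := A))),
        cosetMul H (e x) (e y) = e ⟨(↑x : G → A) * ↑y, ind_mul_mem H _ (fun h x y => hmulA h x y) x.2 y.2⟩) ∧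
      (∀ (g : G) (x : ↥(IndSub H (resAct (R := R) H (A := A)))),
        cosetAct H g (e x) = e ⟨fun s => (↑x : G → A) (g⁻¹ * s), ind_trans_mem H _ g x.2⟩) := by
  classical
  refine ⟨{ toFun := eFun H
            map_add' := by
              intro f f'
              ext q
              simp only [eFun_apply, Finsupp.add_apply, Submodule.coe_add, Pi.add_apply,
                smul_add]
            map_smul' := by
              intro r f
              ext q
              simp only [eFun_apply, Finsupp.smul_apply, SetLike.val_smul, Pi.smul_apply,
                RingHom.id_apply, smul_comm]
            invFun := fun x => ⟨fun s => s⁻¹ • x (QuotientGroup.mk s), invFun_mem H x⟩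
            left_inv := by
              intro f
              ext s
              show s⁻¹ • eFun H f (QuotientGroup.mk s) = (f : G → A) s
              rw [eFun_apply', inv_smul_smul]
            right_inv := by
              intro x
              ext q
              rw [eFun_apply]
              show q.out • (q.out)⁻¹ • x (QuotientGroup.mk q.out) = x q
              rw [smul_inv_smul, QuotientGroup.out_eq'] }, ?_, ?_, ?_⟩
  · intro s b
    ext q
    show eFun H ⟨xiP H (resAct H) s b, xiP_mem H _ s b⟩ q = _
    rw [eFun_apply, Finsupp.single_apply]
    by_cases hq : (QuotientGroup.mk s : G ⧸ H) = q
    · rw [if_pos hq]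
      have hm : s⁻¹ * q.out ∈ H := QuotientGroup.eq.mp (by rw [hq, QuotientGroup.out_eq'])
      show q.out • (if hs : s⁻¹ * q.out ∈ H then resAct H (⟨s⁻¹ * q.out, hs⟩ : H)⁻¹ b else 0) = s • b
      rw [dif_pos hm, resAct_apply']
      show q.out • (⟨s⁻¹ * q.out, hm⟩ : H)⁻¹.val • b = s • b
      simp [smul_smul, mul_assoc]
    · rw [if_neg hq]
      have hm : ¬ (s⁻¹ * q.out ∈ H) := by
        intro hc
        exact hq (by rw [← QuotientGroup.out_eq' q]; exact QuotientGroup.eq.mpr hc)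
      show q.out • (if hs : s⁻¹ * q.out ∈ H then resAct H (⟨s⁻¹ * q.out, hs⟩ : H)⁻¹ b else 0) = 0
      rw [dif_neg hm, smul_zero]
  · intro x y
    ext q
    rw [cosetMul_apply]
    show eFun H x q * eFun H y q = eFun H _ q
    simp only [eFun_apply]
    show _ = q.out • ((x : G → A) q.out * (y : G → A) q.out)
    rw [hmulA]
  · intro g x
    ext q
    rw [cosetAct_apply]
    show g • eFun H x (g⁻¹ • q) = eFun H _ q
    rw [eFun_apply, eFun_apply]
    show g • (g⁻¹ • q).out • (x : G → A) (g⁻¹ • q).out = q.out • (x : G → A) (g⁻¹ * q.out)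
    have key := indsub_rep H (ind_trans_mem H _ g x.2)
      (s := g * (g⁻¹ • q).out) (t := q.out) ?_
    · simpa only [mul_smul, inv_mul_cancel_left] using key
    · calc (QuotientGroup.mk (g * (g⁻¹ • q).out) : G ⧸ H)
          = g • (QuotientGroup.mk (g⁻¹ • q).out : G ⧸ H) := rfl
        _ = g • (g⁻¹ • q) := by rw [QuotientGroup.out_eq']
        _ = q := smul_inv_smul g q
        _ = QuotientGroup.mk q.out := (QuotientGroup.out_eq' q).symm


end
end

section
/- Let B be a G-graded algebra. Then (G ⋊̂ B) ⋊ G ≅ M_G ⊗ B as G-graded algebras, via T(χ_h ⋊ b ⋊ s) = Σ_{r∈G} e_{h, s⁻¹hr} ⊗ b_r, with inverse S(e_{r,s} ⊗ b_q) = χ_r ⋊ b_q ⋊ rqs⁻¹ (for b_q homogeneous of degree q), where M_G ⊗ B carries the grading in which e_{s,t} ⊗ b is homogeneous of degree s·|b|·t⁻¹. -/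
section

variable {R G B : Type*} [CommRing R] [Group G] [DecidableEq G] [NonUnitalRing B]
  [Module R B]

/-- Multiplication of the dual crossed product `G ⋊̂ B` of a `G`-graded algebra `B`
(grading encoded by homogeneous-component projections `p`), modelled on `G →₀ B`:
`(χ_g ⋊ a)(χ_h ⋊ b) = χ_g ⋊ a_{g⁻¹h}·b`. -/
noncomputable def hatMul (p : G → Module.End R B) (x y : G →₀ B) : G →₀ B :=
  Finsupp.sum x fun g a => Finsupp.sum y fun h b =>
    Finsupp.single g (p (g⁻¹ * h) a * b)

/-- Multiplication of `(G ⋊̂ B) ⋊ G`, modelled on `G →₀ (G →₀ B)`, where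
`χ_h ⋊ b ⋊ s` is `single s (single h b)` (the outer coordinate records the `G`-grading):
`(c ⋊ s)(d ⋊ t) = c·(s·d) ⋊ st`, with `s·(χ_g ⋊ b) = χ_{sg} ⋊ b`. -/
noncomputable def crossedHatMul (p : G → Module.End R B) (x y : G →₀ (G →₀ B)) :
    G →₀ (G →₀ B) :=
  Finsupp.sum x fun s c => Finsupp.sum y fun t d =>
    Finsupp.single (s * t) (hatMul p c (Finsupp.mapDomain (fun g => s * g) d))

/-- Multiplication on `M_G ⊗ B`, modelled as `(G × G) →₀ B`
(the element `b ⊗ e_{u,v}` being `single (u,v) b`). -/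
noncomputable def matBMul (x y : (G × G) →₀ B) : (G × G) →₀ B :=
  Finsupp.sum x fun pq a => Finsupp.sum y fun rs b =>
    if pq.2 = rs.1 then Finsupp.single (pq.1, rs.2) (a * b) else 0

/-- The degree-`s` homogeneous component of `M_G ⊗ B`, spanned by the elements
`e_{u,v} ⊗ b` with `b` homogeneous of degree `q` and `s = u·q·v⁻¹`. -/
noncomputable def matGrading (p : G → Module.End R B) (s : G) :
    Submodule R ((G × G) →₀ B) :=
  Submodule.span R {x | ∃ (u v q : G) (b : B),
    u * q * v⁻¹ = s ∧ x = Finsupp.single (u, v) (p q b)}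

section BSaux

set_option linter.unusedSectionVars false

variable (p : G → Module.End R B)


noncomputable def BSPhi (hfin : ∀ b : B, (Function.support fun g => p g b).Finite) :
    B →ₗ[R] (G →₀ B) where
  toFun b := Finsupp.ofSupportFinite (fun g => p g b) (hfin b)
  map_add' x y := by ext g; simp [Finsupp.ofSupportFinite_coe]
  map_smul' r x := by ext g; simp [Finsupp.ofSupportFinite_coe]

variable (hfin : ∀ b : B, (Function.support fun g => p g b).Finite)

@[simp] lemma BSPhi_apply (b : B) (g : G) : BSPhi p hfin b g = p g b := by
  simp [BSPhi, Finsupp.ofSupportFinite_coe]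

noncomputable def BST : (G →₀ (G →₀ B)) →ₗ[R] ((G × G) →₀ B) :=
  Finsupp.lsum R fun s => Finsupp.lsum R fun h =>
    (Finsupp.lsum R fun r => Finsupp.lsingle (h, s⁻¹ * h * r)) ∘ₗ BSPhi p hfin

noncomputable def BSS : ((G × G) →₀ B) →ₗ[R] (G →₀ (G →₀ B)) :=
  Finsupp.lsum R fun rs =>
    (Finsupp.lsum R fun q =>
      (Finsupp.lsingle (rs.1 * q * rs.2⁻¹)).comp (Finsupp.lsingle rs.1)) ∘ₗ BSPhi p hfin

lemma BST_single (s h : G) (b : B) :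
    BST p hfin (Finsupp.single s (Finsupp.single h b)) =
      (BSPhi p hfin b).sum fun r x => Finsupp.single (h, s⁻¹ * h * r) x := by
  rw [BST, Finsupp.lsum_single, Finsupp.lsum_single, LinearMap.comp_apply,
    Finsupp.lsum_apply]
  rfl

lemma BSS_single (r s : G) (b : B) :
    BSS p hfin (Finsupp.single (r, s) b) =
      (BSPhi p hfin b).sum fun q x =>
        Finsupp.single (r * q * s⁻¹) (Finsupp.single r x) := by
  rw [BSS, Finsupp.lsum_single, LinearMap.comp_apply, Finsupp.lsum_apply]
  rfl

variable (hortho : ∀ g h : G, g ≠ h → ∀ b : B, p g (p h b) = 0)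
  (hidem : ∀ (g : G) (b : B), p g (p g b) = p g b)
  (hsum : ∀ b : B, b = ∑ᶠ g : G, p g b)

include hortho hidem in

lemma BSPhi_p (q : G) (b : B) :
    BSPhi p hfin (p q b) = Finsupp.single q (p q b) := by
  ext g
  by_cases h : g = q
  · subst h; simp [hidem]
  · simp [h, hortho g q h b, Finsupp.single_apply, Ne.symm h]

include hsum in
lemma BSPhi_total (b : B) : (BSPhi p hfin b).sum (fun _ x => x) = b := by
  rw [Finsupp.sum]
  conv_rhs => rw [hsum b]
  rw [finsum_eq_sum_of_support_subset]
  · apply Finset.sum_congr rfl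
    intro g _; simp
  · intro g hg
    simp only [Function.mem_support] at hg
    simp [Finsupp.mem_support_iff, hg]

include hortho hidem in
lemma BST_single_p (s h q : G) (b : B) :
    BST p hfin (Finsupp.single s (Finsupp.single h (p q b))) =
      Finsupp.single (h, s⁻¹ * h * q) (p q b) := by
  rw [BST_single, BSPhi_p p hfin hortho hidem, Finsupp.sum_single_index]
  simp

include hortho hidem in
lemma BSS_single_p (r s q : G) (b : B) :
    BSS p hfin (Finsupp.single (r, s) (p q b)) =
      Finsupp.single (r * q * s⁻¹) (Finsupp.single r (p q b)) := by
  rw [BSS_single, BSPhi_p p hfin hortho hidem, Finsupp.sum_single_index]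
  simp

include hortho hidem hsum in
lemma BSS_comp_BST :
    (BSS p hfin).comp (BST p hfin) = LinearMap.id (R := R) (M := G →₀ (G →₀ B)) := by
  ext s h b
  simp only [LinearMap.coe_comp, Function.comp_apply, LinearMap.id_coe, id_eq,
    Finsupp.lsingle_apply]
  rw [BST_single, Finsupp.sum, map_sum]
  have : ∀ r ∈ (BSPhi p hfin b).support,
      BSS p hfin (Finsupp.single (h, s⁻¹ * h * r) (BSPhi p hfin b r)) =
        Finsupp.single s (Finsupp.single h (p r b)) := by
    intro r _
    rw [BSPhi_apply, BSS_single_p p hfin hortho hidem]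
    congr 1
    group
  rw [Finset.sum_congr rfl this]
  rw [← Finsupp.single_finset_sum, ← Finsupp.single_finset_sum]
  have hb : ∑ x ∈ (BSPhi p hfin b).support, p x b = b := by
    simpa [Finsupp.sum] using BSPhi_total p hfin hsum b
  rw [hb]

include hortho hidem hsum in
lemma BST_comp_BSS :
    (BST p hfin).comp (BSS p hfin) = LinearMap.id (R := R) (M := (G × G) →₀ B) := by
  ext rs b
  simp only [LinearMap.coe_comp, Function.comp_apply, LinearMap.id_coe, id_eq,
    Finsupp.lsingle_apply]
  obtain ⟨r, s⟩ := rs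
  rw [BSS_single, Finsupp.sum, map_sum]
  have : ∀ q ∈ (BSPhi p hfin b).support,
      BST p hfin (Finsupp.single (r * q * s⁻¹) (Finsupp.single r (BSPhi p hfin b q))) =
        Finsupp.single (r, s) (p q b) := by
    intro q _
    rw [BSPhi_apply, BST_single_p p hfin hortho hidem]
    congr 2
    group
  rw [Finset.sum_congr rfl this, ← Finsupp.single_finset_sum]
  have hb : ∑ x ∈ (BSPhi p hfin b).support, p x b = b := by
    simpa [Finsupp.sum] using BSPhi_total p hfin hsum b
  rw [hb]

-- additivity lemmas

lemma hatMul_zero_left (y : G →₀ B) : hatMul p 0 y = 0 := by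
  simp [hatMul]

lemma hatMul_zero_right (x : G →₀ B) : hatMul p x 0 = 0 := by
  simp [hatMul]

lemma hatMul_add_left (x x' y : G →₀ B) :
    hatMul p (x + x') y = hatMul p x y + hatMul p x' y := by
  unfold hatMul
  rw [Finsupp.sum_add_index'] <;> simp [add_mul, Finsupp.single_add, Finsupp.sum_add]

lemma hatMul_add_right (x y y' : G →₀ B) :
    hatMul p x (y + y') = hatMul p x y + hatMul p x y' := by
  unfold hatMul
  rw [← Finsupp.sum_add]
  apply Finsupp.sum_congr
  intro g _
  rw [Finsupp.sum_add_index'] <;> simp [mul_add, Finsupp.single_add]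

lemma crossedHatMul_zero_left (y : G →₀ (G →₀ B)) : crossedHatMul p 0 y = 0 := by
  simp [crossedHatMul]

lemma crossedHatMul_zero_right (x : G →₀ (G →₀ B)) : crossedHatMul p x 0 = 0 := by
  simp [crossedHatMul]

lemma crossedHatMul_add_left (x x' y : G →₀ (G →₀ B)) :
    crossedHatMul p (x + x') y = crossedHatMul p x y + crossedHatMul p x' y := by
  unfold crossedHatMul
  rw [Finsupp.sum_add_index'] <;>
    simp [hatMul_zero_left, hatMul_add_left, Finsupp.single_add, Finsupp.sum_add]

lemma crossedHatMul_add_right (x y y' : G →₀ (G →₀ B)) :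
    crossedHatMul p x (y + y') = crossedHatMul p x y + crossedHatMul p x y' := by
  unfold crossedHatMul
  rw [← Finsupp.sum_add]
  apply Finsupp.sum_congr
  intro s _
  rw [Finsupp.sum_add_index'] <;>
    simp [Finsupp.mapDomain_add, hatMul_zero_right, hatMul_add_right, Finsupp.single_add]

lemma matBMul_zero_left (y : (G × G) →₀ B) : matBMul 0 y = 0 := by
  simp [matBMul]

lemma matBMul_zero_right (x : (G × G) →₀ B) : matBMul x 0 = 0 := by
  simp [matBMul]

lemma matBMul_add_left (x x' y : (G × G) →₀ B) :
    matBMul (x + x') y = matBMul x y + matBMul x' y := by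
  unfold matBMul
  rw [Finsupp.sum_add_index']
  · intro pq
    rw [Finsupp.sum]
    apply Finset.sum_eq_zero
    intro rs _
    split <;> simp
  · intro pq b1 b2
    rw [← Finsupp.sum_add]
    apply Finsupp.sum_congr
    intro rs _
    split <;> simp [add_mul, Finsupp.single_add]

lemma matBMul_add_right (x y y' : (G × G) →₀ B) :
    matBMul x (y + y') = matBMul x y + matBMul x y' := by
  unfold matBMul
  rw [← Finsupp.sum_add]
  apply Finsupp.sum_congr
  intro pq _
  rw [Finsupp.sum_add_index']
  · intro rs; split <;> simp
  · intro rs b1 b2; split <;> simp [mul_add, Finsupp.single_add]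

lemma matBMul_sum_left {ι : Type*} (t : Finset ι) (f : ι → ((G × G) →₀ B))
    (y : (G × G) →₀ B) : matBMul (∑ i ∈ t, f i) y = ∑ i ∈ t, matBMul (f i) y := by
  classical
  induction t using Finset.induction with
  | empty => simp [matBMul_zero_left]
  | insert a t' hi ih =>
                    rw [Finset.sum_insert hi, Finset.sum_insert hi, matBMul_add_left, ih]

lemma matBMul_sum_right {ι : Type*} (t : Finset ι) (x : (G × G) →₀ B)
    (f : ι → ((G × G) →₀ B)) : matBMul x (∑ i ∈ t, f i) = ∑ i ∈ t, matBMul x (f i) := by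
  classical
  induction t using Finset.induction with
  | empty => simp [matBMul_zero_right]
  | insert a t' hi ih =>
                    rw [Finset.sum_insert hi, Finset.sum_insert hi, matBMul_add_right, ih]

lemma matBMul_fsum_left {ι M : Type*} [Zero M] (f : ι →₀ M)
    (A : ι → M → ((G × G) →₀ B)) (y : (G × G) →₀ B) :
    matBMul (f.sum A) y = f.sum fun i x => matBMul (A i x) y := by
  rw [Finsupp.sum, Finsupp.sum, matBMul_sum_left]

lemma matBMul_fsum_right {ι M : Type*} [Zero M] (f : ι →₀ M) (x : (G × G) →₀ B)
    (A : ι → M → ((G × G) →₀ B)) :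
    matBMul x (f.sum A) = f.sum fun i m => matBMul x (A i m) := by
  rw [Finsupp.sum, Finsupp.sum, matBMul_sum_right]

-- singles computations

lemma hatMul_single_single (h k : G) (b c : B) :
    hatMul p (Finsupp.single h b) (Finsupp.single k c) =
      Finsupp.single h (p (h⁻¹ * k) b * c) := by
  unfold hatMul
  rw [Finsupp.sum_single_index, Finsupp.sum_single_index]
  · simp
  · simp

lemma crossedHatMul_single_single (s t h k : G) (b c : B) :
    crossedHatMul p (Finsupp.single s (Finsupp.single h b))
        (Finsupp.single t (Finsupp.single k c)) =
      Finsupp.single (s * t) (Finsupp.single h (p (h⁻¹ * (s * k)) b * c)) := by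
  unfold crossedHatMul
  rw [Finsupp.sum_single_index, Finsupp.sum_single_index]
  · rw [Finsupp.mapDomain_single, hatMul_single_single]
  · simp [hatMul_zero_right]
  · simp [hatMul_zero_left]

lemma matBMul_single_single (u v w z : G) (a b : B) :
    matBMul (Finsupp.single (u, v) a) (Finsupp.single (w, z) b) =
      if v = w then Finsupp.single (u, z) (a * b) else 0 := by
  unfold matBMul
  rw [Finsupp.sum_single_index, Finsupp.sum_single_index]
  · split <;> simp
  · rw [Finsupp.sum]
    apply Finset.sum_eq_zero
    intro rs _
    split <;> simp

-- finsum helper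

lemma BSPhi_sum_eq_finsum {N : Type*} [AddCommMonoid N] (d : B) (F : G → B → N)
    (hF : ∀ r, F r 0 = 0) :
    ((BSPhi p hfin d).sum fun r x => F r x) = ∑ᶠ r, F r (p r d) := by
  rw [Finsupp.sum, finsum_eq_sum_of_support_subset]
  · apply Finset.sum_congr rfl
    intro r _
    rw [BSPhi_apply]
  · intro r hr
    simp only [Function.mem_support] at hr
    rw [Finset.mem_coe, Finsupp.mem_support_iff]
    intro h0
    apply hr
    rw [BSPhi_apply] at h0
    rw [h0, hF]

variable (hgr : ∀ (g t : G) (x y : B), p t (p g x * y) = p g x * p (g⁻¹ * t) y)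

include hgr in
lemma BST_mul_single (s t h k : G) (b c : B) :
    BST p hfin (crossedHatMul p (Finsupp.single s (Finsupp.single h b))
        (Finsupp.single t (Finsupp.single k c))) =
      matBMul (BST p hfin (Finsupp.single s (Finsupp.single h b)))
        (BST p hfin (Finsupp.single t (Finsupp.single k c))) := by
  set g : G := h⁻¹ * (s * k) with hg
  -- LHS
  have hL : BST p hfin (crossedHatMul p (Finsupp.single s (Finsupp.single h b))
      (Finsupp.single t (Finsupp.single k c))) =
      ∑ᶠ r, Finsupp.single (h, t⁻¹ * k * r) (p g b * p r c) := by
    rw [crossedHatMul_single_single, BST_single, ← hg,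
      BSPhi_sum_eq_finsum p hfin _ _ (by simp)]
    rw [← finsum_comp_equiv (Equiv.mulLeft g)]
    apply finsum_congr
    intro r
    rw [Equiv.coe_mulLeft, hgr g (g * r) b c]
    congr 2
    · rw [hg]; group
    · congr 1; group
  -- RHS
  have hR : matBMul (BST p hfin (Finsupp.single s (Finsupp.single h b)))
      (BST p hfin (Finsupp.single t (Finsupp.single k c))) =
      ∑ᶠ r, Finsupp.single (h, t⁻¹ * k * r) (p g b * p r c) := by
    rw [BST_single, BST_single]
    rw [matBMul_fsum_left,
      BSPhi_sum_eq_finsum p hfin _ _ (by intro q; simp [matBMul_zero_left])]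
    have step : ∀ q : G,
        matBMul (Finsupp.single (h, s⁻¹ * h * q) (p q b))
          ((BSPhi p hfin c).sum fun r x => Finsupp.single (k, t⁻¹ * k * r) x) =
        ∑ᶠ r, (if s⁻¹ * h * q = k then
          Finsupp.single (h, t⁻¹ * k * r) (p q b * p r c) else 0) := by
      intro q
      rw [matBMul_fsum_right,
        BSPhi_sum_eq_finsum p hfin _ _ (by intro r; simp [matBMul_zero_right])]
      apply finsum_congr
      intro r
      rw [matBMul_single_single]
    rw [finsum_congr step]
    rw [finsum_eq_single _ g]
    · have hcond : s⁻¹ * h * g = k := by rw [hg]; group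
      simp only [hcond, if_true]
    · intro q hq
      have hcond : ¬(s⁻¹ * h * q = k) := by
        intro hqk
        apply hq
        rw [hg, ← hqk]
        group
      simp only [if_neg hcond]
      exact finsum_zero
  rw [hL, hR]

include hgr in
lemma BST_mul_y (s h : G) (b : B) (y : G →₀ (G →₀ B)) :
    BST p hfin (crossedHatMul p (Finsupp.single s (Finsupp.single h b)) y) =
      matBMul (BST p hfin (Finsupp.single s (Finsupp.single h b))) (BST p hfin y) := by
  induction y using Finsupp.induction with
  | zero => simp [crossedHatMul_zero_right, matBMul_zero_right]
  | single_add t d y' h1 h2 ih =>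
    rw [crossedHatMul_add_right, map_add, map_add, matBMul_add_right, ih]
    congr 1
    clear ih h1 h2
    induction d using Finsupp.induction with
    | zero => simp [crossedHatMul_zero_right, matBMul_zero_right]
    | single_add k c d' _ _ ihd =>
      rw [Finsupp.single_add, crossedHatMul_add_right, map_add, map_add,
        matBMul_add_right, ihd, BST_mul_single p hfin hgr]

include hgr in
lemma BST_mul (x y : G →₀ (G →₀ B)) :
    BST p hfin (crossedHatMul p x y) =
      matBMul (BST p hfin x) (BST p hfin y) := by
  induction x using Finsupp.induction with
  | zero => simp [crossedHatMul_zero_left, matBMul_zero_left]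
  | single_add s c x' h1 h2 ih =>
    rw [crossedHatMul_add_left, map_add, map_add, matBMul_add_left, ih]
    congr 1
    clear ih h1 h2
    induction c using Finsupp.induction with
    | zero => simp [crossedHatMul_zero_left, matBMul_zero_left]
    | single_add h b c' _ _ ihc =>
      rw [Finsupp.single_add, crossedHatMul_add_left, map_add, map_add,
        matBMul_add_left, ihc, BST_mul_y p hfin hgr]

lemma BST_mem_grading (s : G) (c : G →₀ B) :
    BST p hfin (Finsupp.single s c) ∈ matGrading p s := by
  rw [BST, Finsupp.lsum_single, Finsupp.lsum_apply, Finsupp.sum]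
  apply Submodule.sum_mem
  intro h _
  rw [LinearMap.comp_apply, Finsupp.lsum_apply, Finsupp.sum]
  apply Submodule.sum_mem
  intro r _
  apply Submodule.subset_span
  refine ⟨h, s⁻¹ * h * r, r, c h, by group, ?_⟩
  rw [Finsupp.lsingle_apply, BSPhi_apply]


end BSaux

/-- Let `B` be a `G`-graded algebra, with homogeneous-component projections
`p`. Then `(G ⋊̂ B) ⋊ G ≅ M_G ⊗ B` as `G`-graded algebras, via
`T(χ_h ⋊ b ⋊ s) = Σ_{r∈G} e_{h, s⁻¹hr} ⊗ b_r`, with inverse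
`S(e_{r,s} ⊗ b_q) = χ_r ⋊ b_q ⋊ rqs⁻¹` for `b_q` homogeneous of degree `q`, where `M_G ⊗ B`
carries the grading in which `e_{u,v} ⊗ b` is homogeneous of degree `u·|b|·v⁻¹`. -/
theorem baaj_skandalis_graded_iso (p : G → Module.End R B)
    (hortho : ∀ g h : G, g ≠ h → ∀ b : B, p g (p h b) = 0)
    (hidem : ∀ (g : G) (b : B), p g (p g b) = p g b)
    (hfin : ∀ b : B, (Function.support fun g => p g b).Finite)
    (hsum : ∀ b : B, b = ∑ᶠ g : G, p g b)
    (hgr : ∀ (g t : G) (x y : B), p t (p g x * y) = p g x * p (g⁻¹ * t) y) :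
    ∃ e : (G →₀ (G →₀ B)) ≃ₗ[R] ((G × G) →₀ B),
      (∀ (s h : G) (b : B),
        e (Finsupp.single s (Finsupp.single h b)) =
          ∑ᶠ r : G, Finsupp.single (h, s⁻¹ * h * r) (p r b)) ∧
      (∀ (r s q : G) (b : B),
        e.symm (Finsupp.single (r, s) (p q b)) =
          Finsupp.single (r * q * s⁻¹) (Finsupp.single r (p q b))) ∧
      (∀ x y : G →₀ (G →₀ B), e (crossedHatMul p x y) = matBMul (e x) (e y)) ∧
      (∀ (s : G) (c : G →₀ B), e (Finsupp.single s c) ∈ matGrading p s) := by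
  refine ⟨LinearEquiv.ofLinear (BST p hfin) (BSS p hfin)
    (BST_comp_BSS p hfin hortho hidem hsum) (BSS_comp_BST p hfin hortho hidem hsum),
    ?_, ?_, ?_, ?_⟩
  · intro s h b
    rw [LinearEquiv.ofLinear_apply, BST_single,
      BSPhi_sum_eq_finsum p hfin _ _ (by simp)]
  · intro r s q b
    rw [LinearEquiv.ofLinear_symm_apply, BSS_single_p p hfin hortho hidem]
  · intro x y
    rw [LinearEquiv.ofLinear_apply, LinearEquiv.ofLinear_apply,
      LinearEquiv.ofLinear_apply, BST_mul p hfin hgr]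
  · intro s c
    rw [LinearEquiv.ofLinear_apply]
    exact BST_mem_grading p hfin s c

end
end
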